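/- For a discrete-time discounted MDP with discount γ ∈ [0,1) and bounded rewards, for any two policies π and π', the difference of expected discounted returns satisfies J(π') − J(π) = (1/(1−γ)) · E_{s ∼ d_{π'}} E_{a ∼ π'(·|s)} [A_π(s, a)], where d_{π'} is the normalized discounted state-visitation distribution of π' and A_π is the advantage function of π. -/

import Mathlib

open scoped BigOperators

section MDP

variable {S A : Type*} [Fintype S] [Fintype A]

/-- `P` is a transition kernel: each `P s a` is a probability distribution on states. -/
def IsKernel (P : S → A → S → ℝ) : Prop :=
  (∀ s a s', 0 ≤ P s a s') ∧ ∀ s a, ∑ s', P s a s' = 1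

/-- `π` is a policy: each `π s` is a probability distribution on actions. -/
def IsPolicy (π : S → A → ℝ) : Prop :=
  (∀ s a, 0 ≤ π s a) ∧ ∀ s, ∑ a, π s a = 1

/-- `ρ` is a probability distribution on states. -/
def IsDist (ρ : S → ℝ) : Prop := (∀ s, 0 ≤ ρ s) ∧ ∑ s, ρ s = 1

/-- Total variation distance between finitely supported distributions. -/
noncomputable def dtv {X : Type*} [Fintype X] (p q : X → ℝ) : ℝ := (1 / 2) * ∑ x, |p x - q x|

/-- One-step state transition probability induced by policy `π`. -/
def stepKernel (P : S → A → S → ℝ) (π : S → A → ℝ) (s s' : S) : ℝ :=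
  ∑ a, π s a * P s a s'

/-- Distribution of the state after `t` steps starting from `s`, following `π`. -/
noncomputable def visit [DecidableEq S] (P : S → A → S → ℝ) (π : S → A → ℝ) : ℕ → S → S → ℝ
  | 0, s, s' => if s' = s then 1 else 0
  | (t + 1), s, s' => ∑ s'', visit P π t s s'' * stepKernel P π s'' s'

/-- Expected one-step reward of policy `π` at state `s`. -/
def rewardOf (r : S → A → ℝ) (π : S → A → ℝ) (s : S) : ℝ := ∑ a, π s a * r s a

/-- State value function `V_π`. -/
noncomputable def Vval [DecidableEq S] (P : S → A → S → ℝ) (r : S → A → ℝ) (γ : ℝ) (π : S → A → ℝ)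
    (s : S) : ℝ :=
  ∑' t : ℕ, γ ^ t * ∑ s', visit P π t s s' * rewardOf r π s'

/-- Action value function `Q_π`. -/
noncomputable def Qval [DecidableEq S] (P : S → A → S → ℝ) (r : S → A → ℝ) (γ : ℝ) (π : S → A → ℝ)
    (s : S) (a : A) : ℝ :=
  r s a + γ * ∑ s', P s a s' * Vval P r γ π s'

/-- Advantage function `A_π = Q_π - V_π`. -/
noncomputable def Adv [DecidableEq S] (P : S → A → S → ℝ) (r : S → A → ℝ) (γ : ℝ) (π : S → A → ℝ)
    (s : S) (a : A) : ℝ :=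
  Qval P r γ π s a - Vval P r γ π s

/-- Expected discounted return `J(π)` from initial distribution `ρ₀`. -/
noncomputable def Jval [DecidableEq S] (P : S → A → S → ℝ) (r : S → A → ℝ) (γ : ℝ) (ρ₀ : S → ℝ)
    (π : S → A → ℝ) : ℝ :=
  ∑ s, ρ₀ s * Vval P r γ π s

/-- Normalized discounted state-visitation distribution `d_π`. -/
noncomputable def dvisit [DecidableEq S] (P : S → A → S → ℝ) (γ : ℝ) (ρ₀ : S → ℝ) (π : S → A → ℝ)
    (s : S) : ℝ :=
  (1 - γ) * ∑' t : ℕ, γ ^ t * ∑ s₀, ρ₀ s₀ * visit P π t s₀ s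

end MDP

section PDLHelpers

variable {S A : Type*} [Fintype S] [Fintype A]

lemma pdl_summable_geom {γ : ℝ} (hγ0 : 0 ≤ γ) (hγ1 : γ < 1) {g : ℕ → ℝ} {C : ℝ}
    (hg : ∀ t, |g t| ≤ C) : Summable fun t => γ ^ t * g t := by
  have h : Summable fun t : ℕ => C * γ ^ t :=
    (summable_geometric_of_lt_one hγ0 hγ1).mul_left C
  refine Summable.of_abs (Summable.of_nonneg_of_le (fun t => abs_nonneg _) (fun t => ?_) h)
  rw [abs_mul, abs_pow, abs_of_nonneg hγ0, mul_comm]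
  exact mul_le_mul_of_nonneg_right (hg t) (pow_nonneg hγ0 t)

lemma pdl_abs_sum_mul_le {X : Type*} [Fintype X] {p g : X → ℝ} (hp0 : ∀ x, 0 ≤ p x)
    (hp1 : ∀ x, p x ≤ 1) : |∑ x, p x * g x| ≤ ∑ x, |g x| := by
  calc |∑ x, p x * g x| ≤ ∑ x, |p x * g x| := Finset.abs_sum_le_sum_abs _ _
    _ ≤ ∑ x, |g x| := Finset.sum_le_sum fun x _ => by
        rw [abs_mul, abs_of_nonneg (hp0 x)]
        exact mul_le_of_le_one_left (abs_nonneg _) (hp1 x)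

lemma pdl_le_one {X : Type*} [Fintype X] {p : X → ℝ} (hp0 : ∀ x, 0 ≤ p x)
    (hp1 : ∑ x, p x = 1) (x : X) : p x ≤ 1 :=
  hp1 ▸ Finset.single_le_sum (fun i _ => hp0 i) (Finset.mem_univ x)

lemma pdl_swap {X Y : Type*} [Fintype X] [Fintype Y] (p : X → ℝ) (K : X → Y → ℝ) (g : Y → ℝ) :
    ∑ x, p x * ∑ y, K x y * g y = ∑ y, (∑ x, p x * K x y) * g y := by
  simp_rw [Finset.mul_sum]
  rw [Finset.sum_comm]
  refine Finset.sum_congr rfl fun y _ => ?_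
  rw [Finset.sum_mul]
  exact Finset.sum_congr rfl fun x _ => by ring

lemma stepKernel_nonneg {P : S → A → S → ℝ} {π : S → A → ℝ} (hP : IsKernel P) (hπ : IsPolicy π)
    (s s' : S) : 0 ≤ stepKernel P π s s' :=
  Finset.sum_nonneg fun a _ => mul_nonneg (hπ.1 s a) (hP.1 s a s')

lemma stepKernel_sum_one {P : S → A → S → ℝ} {π : S → A → ℝ} (hP : IsKernel P) (hπ : IsPolicy π)
    (s : S) : ∑ s', stepKernel P π s s' = 1 := by
  unfold stepKernel
  rw [Finset.sum_comm]
  simp_rw [← Finset.mul_sum, hP.2, mul_one]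
  exact hπ.2 s

lemma visit_nonneg [DecidableEq S] {P : S → A → S → ℝ} {π : S → A → ℝ} (hP : IsKernel P)
    (hπ : IsPolicy π) : ∀ (t : ℕ) (s s' : S), 0 ≤ visit P π t s s' := by
  intro t
  induction t with
  | zero => intro s s'; unfold visit; split <;> norm_num
  | succ t ih =>
      intro s s'
      exact Finset.sum_nonneg fun s'' _ =>
        mul_nonneg (ih s s'') (stepKernel_nonneg hP hπ s'' s')

lemma visit_sum_one [DecidableEq S] {P : S → A → S → ℝ} {π : S → A → ℝ} (hP : IsKernel P)
    (hπ : IsPolicy π) : ∀ (t : ℕ) (s : S), ∑ s', visit P π t s s' = 1 := by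
  intro t
  induction t with
  | zero => intro s; simp [visit]
  | succ t ih =>
      intro s
      show ∑ s', ∑ s'', visit P π t s s'' * stepKernel P π s'' s' = 1
      rw [Finset.sum_comm]
      simp_rw [← Finset.mul_sum, stepKernel_sum_one hP hπ, mul_one]
      exact ih s

end PDLHelpers

/-- **Performance difference lemma (Kakade–Langford).** -/
theorem performance_difference_lemma {S A : Type*} [Fintype S] [DecidableEq S] [Fintype A]
    (P : S → A → S → ℝ) (r : S → A → ℝ) (γ : ℝ) (ρ₀ : S → ℝ) (π π' : S → A → ℝ)
    (hP : IsKernel P) (hπ : IsPolicy π) (hπ' : IsPolicy π') (hρ : IsDist ρ₀)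
    (hγ0 : 0 ≤ γ) (hγ1 : γ < 1) :
    Jval P r γ ρ₀ π' - Jval P r γ ρ₀ π =
      (1 / (1 - γ)) *
        ∑ s, dvisit P γ ρ₀ π' s * ∑ a, π' s a * Adv P r γ π s a := by
  set V : S → ℝ := Vval P r γ π with hVdef
  set rw' : S → ℝ := rewardOf r π' with hrwdef
  set f : S → ℝ := fun s => ∑ a, π' s a * Adv P r γ π s a with hfdef
  set ρt : ℕ → S → ℝ := fun t s => ∑ s₀, ρ₀ s₀ * visit P π' t s₀ s with hρtdef
  set Y : ℕ → ℝ := fun t => ∑ s, ρt t s * rw' s with hYdef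
  set W : ℕ → ℝ := fun t => ∑ s, ρt t s * V s with hWdef
  -- basic facts about ρt
  have hρt0 : ∀ t s, 0 ≤ ρt t s := fun t s =>
    Finset.sum_nonneg fun s₀ _ => mul_nonneg (hρ.1 s₀) (visit_nonneg hP hπ' t s₀ s)
  have hρtsum : ∀ t, ∑ s, ρt t s = 1 := by
    intro t
    show ∑ s, ∑ s₀, ρ₀ s₀ * visit P π' t s₀ s = 1
    rw [Finset.sum_comm]
    simp_rw [← Finset.mul_sum, visit_sum_one hP hπ', mul_one]
    exact hρ.2
  have hρt1 : ∀ t s, ρt t s ≤ 1 := fun t s => pdl_le_one (hρt0 t) (hρtsum t) s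
  have hρzero : ∀ s, ρt 0 s = ρ₀ s := by
    intro s
    show ∑ s₀, ρ₀ s₀ * visit P π' 0 s₀ s = ρ₀ s
    simp [visit]
  -- f expansion
  have hf_eq : ∀ s, f s = rw' s + γ * (∑ s', stepKernel P π' s s' * V s') - V s := by
    intro s
    show ∑ a, π' s a * Adv P r γ π s a = _
    unfold Adv Qval
    simp_rw [mul_sub, mul_add, Finset.sum_sub_distrib, Finset.sum_add_distrib,
      ← Finset.sum_mul, hπ'.2 s, one_mul]
    have hmid : ∑ a, π' s a * (γ * ∑ s', P s a s' * V s')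
        = γ * ∑ s', stepKernel P π' s s' * V s' := by
      calc ∑ a, π' s a * (γ * ∑ s', P s a s' * V s')
          = γ * ∑ a, π' s a * ∑ s', P s a s' * V s' := by
            rw [Finset.mul_sum]
            exact Finset.sum_congr rfl fun a _ => by ring
        _ = γ * ∑ s', stepKernel P π' s s' * V s' := by rw [pdl_swap]; rfl
    rw [hmid]
    rfl
  -- one-step pushforward of ρt
  have hpush : ∀ (t : ℕ) (s' : S), ρt (t + 1) s' = ∑ s, ρt t s * stepKernel P π' s s' := by
    intro t s'
    have h : ∀ s'' : S, (fun s'' => stepKernel P π' s'' s') s'' = stepKernel P π' s'' s' :=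
      fun _ => rfl
    show ∑ s₀, ρ₀ s₀ * ∑ s'', visit P π' t s₀ s'' * stepKernel P π' s'' s' = _
    rw [pdl_swap ρ₀ (visit P π' t) (fun s'' => stepKernel P π' s'' s')]
  -- main one-step identity
  have hX : ∀ t, ∑ s, ρt t s * f s = Y t + γ * W (t + 1) - W t := by
    intro t
    have h1 : ∀ s, ρt t s * f s = ρt t s * rw' s
        + γ * (ρt t s * ∑ s', stepKernel P π' s s' * V s') - ρt t s * V s := by
      intro s; rw [hf_eq s]; ring
    simp_rw [h1, Finset.sum_sub_distrib, Finset.sum_add_distrib, ← Finset.mul_sum]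
    have h2 : ∑ s, ρt t s * ∑ s', stepKernel P π' s s' * V s' = W (t + 1) := by
      rw [pdl_swap]
      simp_rw [← hpush t]
      rfl
    rw [h2]
  -- bounds and summability
  have hWb : ∀ t, |W t| ≤ ∑ s, |V s| := fun t => pdl_abs_sum_mul_le (hρt0 t) (hρt1 t)
  have hYb : ∀ t, |Y t| ≤ ∑ s, |rw' s| := fun t => pdl_abs_sum_mul_le (hρt0 t) (hρt1 t)
  have hsumW : Summable fun t => γ ^ t * W t := pdl_summable_geom hγ0 hγ1 hWb
  have hsumW' : Summable fun t => γ ^ t * (γ * W (t + 1)) :=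
    pdl_summable_geom hγ0 hγ1 (g := fun t => γ * W (t + 1)) (C := γ * ∑ s, |V s|)
      (fun t => by
        rw [abs_mul, abs_of_nonneg hγ0]
        exact mul_le_mul_of_nonneg_left (hWb (t + 1)) hγ0)
  have hsumY : Summable fun t => γ ^ t * Y t := pdl_summable_geom hγ0 hγ1 hYb
  -- telescoping
  have htel : ∑' t, γ ^ t * (γ * W (t + 1)) = (∑' t, γ ^ t * W t) - W 0 := by
    have h1 : ∑' t, γ ^ t * W t = W 0 + ∑' t, γ ^ (t + 1) * W (t + 1) := by
      simpa using Summable.tsum_eq_zero_add hsumW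
    have h2 : ∑' t, γ ^ t * (γ * W (t + 1)) = ∑' t, γ ^ (t + 1) * W (t + 1) :=
      tsum_congr fun t => by ring
    rw [h2]; linarith
  -- J(π') as a tsum
  have hJπ' : Jval P r γ ρ₀ π' = ∑' t, γ ^ t * Y t := by
    unfold Jval Vval
    have hs : ∀ s : S, Summable fun t : ℕ =>
        ρ₀ s * (γ ^ t * ∑ s', visit P π' t s s' * rw' s') := by
      intro s
      have he : ∀ t : ℕ, ρ₀ s * (γ ^ t * ∑ s', visit P π' t s s' * rw' s')
          = γ ^ t * (ρ₀ s * ∑ s', visit P π' t s s' * rw' s') := fun t => by ring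
      simp_rw [he]
      refine pdl_summable_geom hγ0 hγ1 (C := ∑ s', |rw' s'|) fun t => ?_
      rw [abs_mul, abs_of_nonneg (hρ.1 s)]
      calc ρ₀ s * |∑ s', visit P π' t s s' * rw' s'|
          ≤ 1 * |∑ s', visit P π' t s s' * rw' s'| :=
            mul_le_mul_of_nonneg_right (pdl_le_one hρ.1 hρ.2 s) (abs_nonneg _)
        _ ≤ ∑ s', |rw' s'| := by
            rw [one_mul]
            exact pdl_abs_sum_mul_le (fun s' => visit_nonneg hP hπ' t s s')
              (fun s' => pdl_le_one (visit_nonneg hP hπ' t s) (visit_sum_one hP hπ' t s) s')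
    simp_rw [← tsum_mul_left]
    rw [← Summable.tsum_finsetSum (fun s _ => hs s)]
    refine tsum_congr fun t => ?_
    have he : ∀ s : S, ρ₀ s * (γ ^ t * ∑ s', visit P π' t s s' * rw' s')
        = γ ^ t * (ρ₀ s * ∑ s', visit P π' t s s' * rw' s') := fun s => by ring
    simp_rw [he, ← Finset.mul_sum]
    congr 1
    rw [pdl_swap ρ₀ (visit P π' t) rw']
  -- W 0 = J(π)
  have hW0 : W 0 = Jval P r γ ρ₀ π := by
    show ∑ s, ρt 0 s * V s = _
    unfold Jval
    exact Finset.sum_congr rfl fun s _ => by rw [hρzero s]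
  -- summability in s of the double sum
  have hfsum : ∀ s : S, Summable fun t : ℕ => γ ^ t * (ρt t s * f s) := by
    intro s
    refine pdl_summable_geom hγ0 hγ1 (C := |f s|) fun t => ?_
    rw [abs_mul, abs_of_nonneg (hρt0 t s)]
    exact mul_le_of_le_one_left (abs_nonneg _) (hρt1 t s)
  -- rewrite the RHS sum
  have hsum_main : ∑ s, dvisit P γ ρ₀ π' s * f s
      = (1 - γ) * ∑' t, γ ^ t * ∑ s, ρt t s * f s := by
    have hd : ∀ s, dvisit P γ ρ₀ π' s * f s = (1 - γ) * ∑' t, γ ^ t * (ρt t s * f s) := by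
      intro s
      unfold dvisit
      rw [mul_assoc, ← tsum_mul_right]
      congr 1
      exact tsum_congr fun t => by ring
    simp_rw [hd, ← Finset.mul_sum]
    congr 1
    rw [← Summable.tsum_finsetSum (fun s _ => hfsum s)]
    exact tsum_congr fun t => by rw [← Finset.mul_sum]
  -- compute the tsum
  have hZ : ∑' t, γ ^ t * ∑ s, ρt t s * f s = Jval P r γ ρ₀ π' - Jval P r γ ρ₀ π := by
    have hXpt : ∀ t : ℕ, γ ^ t * ∑ s, ρt t s * f s
        = γ ^ t * Y t + γ ^ t * (γ * W (t + 1)) - γ ^ t * W t := fun t => by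
      rw [hX t]; ring
    rw [tsum_congr hXpt, Summable.tsum_sub (hsumY.add hsumW') hsumW, Summable.tsum_add hsumY hsumW', htel,
      hJπ', hW0]
    ring
  show Jval P r γ ρ₀ π' - Jval P r γ ρ₀ π = (1 / (1 - γ)) * ∑ s, dvisit P γ ρ₀ π' s * f s
  rw [hsum_main, ← mul_assoc, one_div_mul_cancel (by linarith : (1 : ℝ) - γ ≠ 0), one_mul, hZ]
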